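/- Dual lower bound for universal vector colorings: let w_1,...,w_ℓ ∈ ℝ^n with ℓ = δn, β ∈ (0, 1−δ). Suppose η ∈ ℝ^ℓ, G ⪰ 0, q ≥ 0 satisfy ∑_k η_k w_k w_k^T + G − (1/β)diag(G) + ∑_i q_i e_i e_i^T ⪰ I. Then ∑_i q_i ≥ (1 − δ − β)n. -/

import Mathlib

open Matrix

section DualSDPAux

variable {n : ℕ}

private lemma inner_eq_dot (x y : EuclideanSpace ℝ (Fin n)) :
    (inner ℝ x y : ℝ) = dotProduct x y := by
  simp [PiLp.inner_apply, dotProduct, RCLike.inner_apply, starRingEnd_apply]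
  exact Finset.sum_congr rfl fun _ _ => mul_comm _ _

private lemma dot_symm_mulVec {A : Matrix (Fin n) (Fin n) ℝ} (hA : Aᵀ = A) (x y : Fin n → ℝ) :
    x ⬝ᵥ (A *ᵥ y) = (A *ᵥ x) ⬝ᵥ y := by
  rw [Matrix.dotProduct_mulVec, ← Matrix.mulVec_transpose, hA]

private lemma sum_dot {ι : Type*} [Fintype ι] (f : ι → Fin n → ℝ) (w : Fin n → ℝ) :
    (∑ a, f a) ⬝ᵥ w = ∑ a, f a ⬝ᵥ w := by
  simp only [dotProduct, Finset.sum_apply, Finset.sum_mul]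
  exact Finset.sum_comm

private lemma dot_sum {ι : Type*} [Fintype ι] (w : Fin n → ℝ) (f : ι → Fin n → ℝ) :
    w ⬝ᵥ (∑ a, f a) = ∑ a, w ⬝ᵥ f a := by
  simp only [dotProduct, Finset.sum_apply, Finset.mul_sum]
  exact Finset.sum_comm

private lemma quad_expand (A : Matrix (Fin n) (Fin n) ℝ) {ι : Type*} [Fintype ι]
    (c : ι → ℝ) (v : ι → Fin n → ℝ) :
    (∑ a, c a • v a) ⬝ᵥ (A *ᵥ (∑ a, c a • v a))
      = ∑ a, ∑ b, c a * c b * (v a ⬝ᵥ (A *ᵥ v b)) := by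
  have hAv : A *ᵥ (∑ a, c a • v a) = ∑ b, c b • (A *ᵥ v b) := by
    simp only [← Matrix.mulVecLin_apply, map_sum, LinearMap.map_smul]
  rw [hAv, sum_dot]
  refine Finset.sum_congr rfl fun a _ => ?_
  rw [smul_dotProduct, dot_sum, Finset.smul_sum]
  refine Finset.sum_congr rfl fun b _ => ?_
  rw [dotProduct_smul]
  simp only [smul_eq_mul]; ring

private lemma vecMulVec_mulVec' (u v x : Fin n → ℝ) :
    Matrix.vecMulVec u v *ᵥ x = (v ⬝ᵥ x) • u := by
  funext i
  simp [Matrix.mulVec, Matrix.vecMulVec_apply, dotProduct, Finset.mul_sum, Finset.sum_mul,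
    mul_comm, mul_assoc, mul_left_comm]

private lemma sum_matrix_mulVec {ι : Type*} [Fintype ι] (M : ι → Matrix (Fin n) (Fin n) ℝ)
    (x : Fin n → ℝ) : (∑ k, M k) *ᵥ x = ∑ k, (M k) *ᵥ x := by
  funext i
  simp only [Matrix.mulVec, dotProduct, Matrix.sum_apply, Finset.sum_apply, Finset.sum_mul]
  exact Finset.sum_comm

private lemma psd_diag_nonneg {G : Matrix (Fin n) (Fin n) ℝ} (hG : G.PosSemidef) (i : Fin n) :
    0 ≤ G i i := by
  have h := hG.dotProduct_mulVec_nonneg (Pi.single i 1)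
  simpa [Matrix.mulVec_single, single_dotProduct] using h

private lemma psd_row_zero {G : Matrix (Fin n) (Fin n) ℝ} (hG : G.PosSemidef)
    {i j : Fin n} (h : G i i = 0) : G i j = 0 := by
  have hsym : ∀ a b, G b a = G a b := fun a b => by
    conv_lhs => rw [← hG.1]
    simp [Matrix.conjTranspose_apply]
  by_cases hij : i = j
  · subst hij; exact h
  by_contra hne
  set t : ℝ := -(G j j + 1) / (2 * G i j) with ht
  have h2 := hG.dotProduct_mulVec_nonneg ((Pi.single i t : Fin n → ℝ) + (Pi.single j 1 : Fin n → ℝ))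
  rw [show star ((Pi.single i t : Fin n → ℝ) + (Pi.single j 1 : Fin n → ℝ))
      = (Pi.single i t : Fin n → ℝ) + (Pi.single j 1 : Fin n → ℝ) from star_trivial _] at h2
  have hval : ((Pi.single i t : Fin n → ℝ) + (Pi.single j 1 : Fin n → ℝ)) ⬝ᵥ
        (G *ᵥ ((Pi.single i t : Fin n → ℝ) + (Pi.single j 1 : Fin n → ℝ)))
      = 2 * t * G i j + G j j := by
    rw [Matrix.mulVec_add, dotProduct_add, add_dotProduct, add_dotProduct]
    simp only [Matrix.mulVec_single, single_dotProduct, Pi.smul_apply, op_smul_eq_mul,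
      Matrix.col_apply, mul_one]
    rw [h, hsym i j]
    ring
  rw [hval] at h2
  have : 2 * t * G i j = -(G j j + 1) := by
    rw [ht]; field_simp
  rw [this] at h2
  linarith

private lemma psd_exists_sqrt {R : Matrix (Fin n) (Fin n) ℝ} (hR : R.PosSemidef) :
    ∃ C : Matrix (Fin n) (Fin n) ℝ, R = Cᴴ * C := by
  open scoped MatrixOrder in
  exact CStarAlgebra.nonneg_iff_eq_star_mul_self.mp hR.nonneg

/-- Key counting lemma. -/
private lemma count_le' {β : ℝ} (hβ : 0 < β) {G : Matrix (Fin n) (Fin n) ℝ}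
    (hG : G.PosSemidef) {ι : Type*} [Fintype ι] (y : ι → EuclideanSpace ℝ (Fin n))
    (hc : ∀ c : ι → ℝ, c ≠ 0 →
      dotProduct (∑ a, c a • y a)
          (Matrix.diagonal (fun i => G i i) *ᵥ (∑ a, c a • y a))
        < β * dotProduct (∑ a, c a • y a) (G *ᵥ (∑ a, c a • y a))) :
    (Fintype.card ι : ℝ) ≤ β * n := by
  classical
  set D2 : Matrix (Fin n) (Fin n) ℝ := Matrix.diagonal (fun i => G i i) with hD2
  set s : Fin n → ℝ := fun j => Real.sqrt (G j j) with hs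
  set f : Fin n → ℝ := fun j => if G j j = 0 then 0 else (Real.sqrt (G j j))⁻¹ with hf
  set Dh : Matrix (Fin n) (Fin n) ℝ := Matrix.diagonal s with hDh
  set Dm : Matrix (Fin n) (Fin n) ℝ := Matrix.diagonal f with hDm
  have hDht : Dhᵀ = Dh := Matrix.diagonal_transpose s
  have hDhDh : Dh * Dh = D2 := by
    rw [hDh, Matrix.diagonal_mul_diagonal, hD2]
    refine congrArg Matrix.diagonal (funext fun j => ?_)
    exact Real.mul_self_sqrt (psd_diag_nonneg hG j)
  set R : Matrix (Fin n) (Fin n) ℝ := Dm * G * Dm with hR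
  have hRpsd : R.PosSemidef := by
    have h1 : Dmᴴ = Dm := by
      rw [hDm, Matrix.diagonal_conjTranspose]
      congr 1
    have h2 := hG.conjTranspose_mul_mul_same Dm
    rwa [h1] at h2
  have hsqpos : ∀ i : Fin n, ¬ G i i = 0 → s i ≠ 0 := by
    intro i hi
    rw [hs, Real.sqrt_ne_zero']
    exact lt_of_le_of_ne (psd_diag_nonneg hG i) (Ne.symm hi)
  have hfact : Dh * R * Dh = G := by
    funext i j
    have h1 : (Dh * R * Dh) i j = s i * (f i * G i j * f j) * s j := by
      rw [Matrix.mul_diagonal, Matrix.diagonal_mul]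
      rw [hR, Matrix.mul_diagonal, Matrix.diagonal_mul]
    rw [h1]
    by_cases hi : G i i = 0
    · rw [psd_row_zero hG hi]
      simp only [hf, hi, if_true, hs]
      ring
    by_cases hj : G j j = 0
    · have h2 : G j i = 0 := psd_row_zero hG hj
      have hji : G i j = 0 := by
        conv_lhs => rw [← hG.1]
        simpa [Matrix.conjTranspose_apply] using h2
      rw [hji]
      simp only [hf, hj, if_true]
      ring
    have hsi : s i * f i = 1 := by
      simp only [hf, hi, if_false]
      exact mul_inv_cancel₀ (by rw [hs]; exact hsqpos i hi)
    have hsj : f j * s j = 1 := by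
      simp only [hf, hj, if_false]
      rw [mul_comm]
      exact mul_inv_cancel₀ (by rw [hs]; exact hsqpos j hj)
    calc s i * (f i * G i j * f j) * s j = (s i * f i) * G i j * (f j * s j) := by ring
    _ = G i j := by rw [hsi, hsj]; ring
  have hRdiag : ∀ j, R j j ≤ 1 := by
    intro j
    have h1 : R j j = f j * G j j * f j := by
      rw [hR, Matrix.mul_diagonal, Matrix.diagonal_mul]
    rw [h1, hf]
    by_cases hj : G j j = 0
    · simp [hj]
    · simp only [hj, if_false]
      have hpos : 0 < G j j := lt_of_le_of_ne (psd_diag_nonneg hG j) (Ne.symm hj)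
      rw [show (Real.sqrt (G j j))⁻¹ * G j j * (Real.sqrt (G j j))⁻¹
          = G j j / (Real.sqrt (G j j) * Real.sqrt (G j j)) by ring]
      rw [Real.mul_self_sqrt hpos.le, div_self hj]
  obtain ⟨C, hC⟩ := psd_exists_sqrt hRpsd
  set g : ι → EuclideanSpace ℝ (Fin n) := fun a => Matrix.toEuclideanLin Dh (y a) with hg
  have hgli : LinearIndependent ℝ g := by
    rw [Fintype.linearIndependent_iff]
    intro c h0
    by_contra hcon
    push_neg at hcon
    obtain ⟨a0, ha0⟩ := hcon
    have hcne : c ≠ 0 := fun hcc => ha0 (by rw [hcc]; rfl)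
    have h1 : Matrix.toEuclideanLin Dh (∑ a, c a • y a) = 0 := by
      rw [map_sum]
      simpa only [LinearMap.map_smul] using h0
    have h2 : Dh *ᵥ (∑ a, c a • y a) = 0 := by
      have h1' := congrArg WithLp.ofLp h1
      rw [Matrix.ofLp_toEuclideanLin_apply, WithLp.ofLp_sum] at h1'
      simpa using h1'
    have h3 : dotProduct (∑ a, c a • y a) (D2 *ᵥ (∑ a, c a • y a)) = 0 := by
      rw [← hDhDh, ← Matrix.mulVec_mulVec, h2]
      simp
    have h4 : dotProduct (∑ a, c a • y a) (G *ᵥ (∑ a, c a • y a)) = 0 := by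
      rw [← hfact, ← Matrix.mulVec_mulVec, ← Matrix.mulVec_mulVec, h2]
      simp
    have h5 := hc c hcne
    rw [h3, h4] at h5
    simp at h5
  set W : Submodule ℝ (EuclideanSpace ℝ (Fin n)) := Submodule.span ℝ (Set.range g) with hW
  have hdim : Module.finrank ℝ W = Fintype.card ι := finrank_span_eq_card hgli
  set Z := stdOrthonormalBasis ℝ W with hZ
  have hZon : Orthonormal ℝ (fun b => ((Z b : W) : EuclideanSpace ℝ (Fin n))) :=
    Z.orthonormal.comp_linearIsometry W.subtypeₗᵢ
  have key : ∀ b0 : Fin (Module.finrank ℝ W),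
      1 ≤ β * dotProduct ((Z b0 : W) : EuclideanSpace ℝ (Fin n))
        (R *ᵥ ((Z b0 : W) : EuclideanSpace ℝ (Fin n))) := by
    intro b0
    obtain ⟨c, hcz⟩ := (Submodule.mem_span_range_iff_exists_fun ℝ).mp (Z b0 : W).2
    have hDu : Dh *ᵥ (∑ a, c a • y a) = ((Z b0 : W) : EuclideanSpace ℝ (Fin n)) := by
      have h1 : Matrix.toEuclideanLin Dh (∑ a, c a • y a)
          = ((Z b0 : W) : EuclideanSpace ℝ (Fin n)) := by
        rw [map_sum]
        simpa only [LinearMap.map_smul] using hcz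
      have h1' := congrArg WithLp.ofLp h1
      rw [Matrix.ofLp_toEuclideanLin_apply, WithLp.ofLp_sum] at h1'
      simpa using h1'
    have hznorm : dotProduct ((Z b0 : W) : EuclideanSpace ℝ (Fin n))
        ((Z b0 : W) : EuclideanSpace ℝ (Fin n)) = 1 := by
      have h1 : ‖((Z b0 : W) : EuclideanSpace ℝ (Fin n))‖ = 1 := by
        rw [Submodule.norm_coe]
        exact Z.orthonormal.1 b0
      have h2 := real_inner_self_eq_norm_sq ((Z b0 : W) : EuclideanSpace ℝ (Fin n))
      rw [inner_eq_dot] at h2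
      rw [h2, h1]; norm_num
    have hcne : c ≠ 0 := by
      intro h0
      rw [h0] at hcz
      simp only [Pi.zero_apply, zero_smul, Finset.sum_const_zero] at hcz
      rw [← hcz] at hznorm
      simp [dotProduct] at hznorm
    have h5 := hc c hcne
    have hDnorm : dotProduct (∑ a, c a • y a) (D2 *ᵥ (∑ a, c a • y a)) = 1 := by
      rw [← hDhDh, ← Matrix.mulVec_mulVec, dot_symm_mulVec hDht]
      simp only [WithLp.ofLp_smul]
      rw [hDu, hznorm]
    have hGu : dotProduct (∑ a, c a • y a) (G *ᵥ (∑ a, c a • y a))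
        = dotProduct ((Z b0 : W) : EuclideanSpace ℝ (Fin n))
            (R *ᵥ ((Z b0 : W) : EuclideanSpace ℝ (Fin n))) := by
      rw [← hfact, ← Matrix.mulVec_mulVec, ← Matrix.mulVec_mulVec,
        dot_symm_mulVec hDht]
      simp only [WithLp.ofLp_smul]
      rw [hDu]
    rw [hDnorm, hGu] at h5
    linarith
  have hform : ∀ z : Fin n → ℝ, z ⬝ᵥ (R *ᵥ z) = ∑ i, (C i ⬝ᵥ z) ^ 2 := by
    intro z
    rw [hC, ← Matrix.mulVec_mulVec, Matrix.dotProduct_mulVec]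
    have h1 : z ᵥ* Cᴴ = C *ᵥ z := by
      funext i
      simp [Matrix.vecMul, Matrix.mulVec, dotProduct, Matrix.conjTranspose_apply, mul_comm]
    rw [h1]
    simp [dotProduct, Matrix.mulVec, pow_two]
  have bessel : ∀ i : Fin n,
      ∑ b0, (dotProduct (C i) ((Z b0 : W) : EuclideanSpace ℝ (Fin n))) ^ 2
        ≤ ∑ j, (C i j) ^ 2 := by
    intro i
    set rowE : EuclideanSpace ℝ (Fin n) := (WithLp.equiv 2 (Fin n → ℝ)).symm (C i) with hrowE
    have hb := Orthonormal.sum_inner_products_le (𝕜 := ℝ)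
      (s := Finset.univ) (x := rowE) hZon
    have h2 : ‖rowE‖ ^ 2 = ∑ j, (C i j) ^ 2 := by
      rw [← real_inner_self_eq_norm_sq, inner_eq_dot]
      show dotProduct (C i) (C i) = _
      simp [dotProduct, pow_two]
    calc ∑ b0, (dotProduct (C i) ((Z b0 : W) : EuclideanSpace ℝ (Fin n))) ^ 2
        = ∑ b0, ‖inner (𝕜 := ℝ) ((Z b0 : W) : EuclideanSpace ℝ (Fin n)) rowE‖ ^ 2 := by
          refine Finset.sum_congr rfl fun b0 _ => ?_
          rw [inner_eq_dot, Real.norm_eq_abs, sq_abs, dotProduct_comm]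
          rfl
    _ ≤ ‖rowE‖ ^ 2 := hb
    _ = ∑ j, (C i j) ^ 2 := h2
  have htrace : ∑ j, ∑ i, (C i j) ^ 2 = ∑ j, R j j := by
    refine Finset.sum_congr rfl fun j _ => ?_
    rw [hC]
    simp [Matrix.mul_apply, Matrix.conjTranspose_apply, pow_two]
  have hchain : (Module.finrank ℝ W : ℝ) ≤ β * (n : ℝ) := by
    have h1 : (Module.finrank ℝ W : ℝ)
        ≤ β * ∑ b0, dotProduct ((Z b0 : W) : EuclideanSpace ℝ (Fin n))
            (R *ᵥ ((Z b0 : W) : EuclideanSpace ℝ (Fin n))) := by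
      rw [Finset.mul_sum]
      calc (Module.finrank ℝ W : ℝ) = ∑ _b0 : Fin (Module.finrank ℝ W), (1 : ℝ) := by simp
      _ ≤ _ := Finset.sum_le_sum fun b0 _ => key b0
    have h2 : ∑ b0, dotProduct ((Z b0 : W) : EuclideanSpace ℝ (Fin n))
            (R *ᵥ ((Z b0 : W) : EuclideanSpace ℝ (Fin n)))
        ≤ (n : ℝ) := by
      calc ∑ b0, dotProduct ((Z b0 : W) : EuclideanSpace ℝ (Fin n))
            (R *ᵥ ((Z b0 : W) : EuclideanSpace ℝ (Fin n)))
          = ∑ b0, ∑ i, (dotProduct (C i) ((Z b0 : W) : EuclideanSpace ℝ (Fin n))) ^ 2 :=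
            Finset.sum_congr rfl fun b0 _ => hform _
      _ = ∑ i, ∑ b0, (dotProduct (C i) ((Z b0 : W) : EuclideanSpace ℝ (Fin n))) ^ 2 :=
            Finset.sum_comm
      _ ≤ ∑ i, ∑ j, (C i j) ^ 2 := Finset.sum_le_sum fun i _ => bessel i
      _ = ∑ j, ∑ i, (C i j) ^ 2 := Finset.sum_comm
      _ = ∑ j, R j j := htrace
      _ ≤ ∑ _j : Fin n, (1 : ℝ) := Finset.sum_le_sum fun j _ => hRdiag j
      _ = (n : ℝ) := by simp
    calc (Module.finrank ℝ W : ℝ)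
        ≤ β * ∑ b0, dotProduct ((Z b0 : W) : EuclideanSpace ℝ (Fin n))
            (R *ᵥ ((Z b0 : W) : EuclideanSpace ℝ (Fin n))) := h1
    _ ≤ β * (n : ℝ) := mul_le_mul_of_nonneg_left h2 hβ.le
  rw [hdim] at hchain
  exact hchain


end DualSDPAux

set_option maxHeartbeats 2000000 in
/-- Dual lower bound: if `ℓ = δn`, `β ∈ (0, 1-δ)`, and `(η, G, q)` is feasible for
the dual program, i.e. `G ⪰ 0`, `q ≥ 0` and
`∑ₖ ηₖ wₖwₖᵀ + G - (1/β)·diag(G) + ∑ᵢ qᵢ eᵢeᵢᵀ ⪰ I`, then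
`∑ᵢ qᵢ ≥ (1 - δ - β)n`. -/
theorem dual_sdp_lower_bound (n l : ℕ) (δ β : ℝ) (hδ0 : 0 ≤ δ) (hδ1 : δ < 1)
    (hl : (l : ℝ) = δ * n) (hβ : β ∈ Set.Ioo (0 : ℝ) (1 - δ))
    (w : Fin l → Fin n → ℝ) (η : Fin l → ℝ)
    (G : Matrix (Fin n) (Fin n) ℝ) (hG : G.PosSemidef)
    (q : Fin n → ℝ) (hq : ∀ i, 0 ≤ q i)
    (hfeas : ((∑ k, η k • Matrix.vecMulVec (w k) (w k)) + G
        - (1 / β) • Matrix.diagonal (fun i => G i i) + Matrix.diagonal q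
        - (1 : Matrix (Fin n) (Fin n) ℝ)).PosSemidef) :
    (1 - δ - β) * n ≤ ∑ i, q i := by
  classical
  obtain ⟨hβ0, hβδ⟩ := hβ
  set Dg : Matrix (Fin n) (Fin n) ℝ := Matrix.diagonal (fun i => G i i) with hDg
  set A0 : Matrix (Fin n) (Fin n) ℝ := G - (1/β) • Dg with hA0
  have hGsym : Gᵀ = G := by
    calc Gᵀ = Gᴴ := by
          funext i j
          simp [Matrix.conjTranspose_apply, Matrix.transpose_apply]
    _ = G := hG.1
  have hA0sym : A0ᵀ = A0 := by
    rw [hA0, Matrix.transpose_sub, Matrix.transpose_smul, hDg, Matrix.diagonal_transpose, hGsym]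
  -- the subspace S of vectors orthogonal to all w k
  set Φ : EuclideanSpace ℝ (Fin n) →ₗ[ℝ] EuclideanSpace ℝ (Fin l) :=
    Matrix.toEuclideanLin (Matrix.of w) with hΦ
  set S : Submodule ℝ (EuclideanSpace ℝ (Fin n)) := LinearMap.ker Φ with hS
  have hSmem : ∀ v : EuclideanSpace ℝ (Fin n), v ∈ S → ∀ k, w k ⬝ᵥ v = 0 := by
    intro v hv k
    rw [hS, LinearMap.mem_ker] at hv
    exact congrArg (fun z : EuclideanSpace ℝ (Fin l) => z k) hv
  have hrank : n ≤ Module.finrank ℝ S + l := by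
    have h1 := LinearMap.finrank_range_add_finrank_ker Φ
    rw [finrank_euclideanSpace_fin] at h1
    rw [← hS] at h1
    have h2 : Module.finrank ℝ (LinearMap.range Φ) ≤ l := by
      have h3 := Submodule.finrank_le (LinearMap.range Φ)
      rwa [finrank_euclideanSpace_fin] at h3
    omega
  -- compression of A0 to S
  set Alin := Matrix.toEuclideanLin A0 with hAlin
  set T : S →ₗ[ℝ] S :=
    (Submodule.orthogonalProjection S).toLinearMap ∘ₗ (Alin ∘ₗ S.subtype) with hTdef
  have hTsym : T.IsSymmetric := by
    intro u v
    show (inner ℝ (Submodule.orthogonalProjection S (Alin ↑u)) v : ℝ)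
      = inner ℝ u (Submodule.orthogonalProjection S (Alin ↑v))
    rw [Submodule.inner_orthogonalProjection_eq_of_mem_right, Submodule.inner_orthogonalProjection_eq_of_mem_left]
    rw [inner_eq_dot, inner_eq_dot]
    show dotProduct (A0 *ᵥ ↑u) ↑v = dotProduct ↑u (A0 *ᵥ ↑v)
    rw [dot_symm_mulVec hA0sym]
  set m := Module.finrank ℝ S with hm
  set bb := hTsym.eigenvectorBasis hm.symm with hbb
  set μ := hTsym.eigenvalues hm.symm with hμ
  have heig : ∀ a, T (bb a) = μ a • bb a := by
    intro a
    have h1 := (hTsym.hasEigenvector_eigenvectorBasis hm.symm a).1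
    rw [Module.End.mem_eigenspace_iff] at h1
    exact_mod_cast h1
  have hxon : Orthonormal ℝ (fun a => ((bb a : S) : EuclideanSpace ℝ (Fin n))) :=
    bb.orthonormal.comp_linearIsometry S.subtypeₗᵢ
  have hxAx : ∀ a a' : Fin m,
      dotProduct ((bb a : S) : EuclideanSpace ℝ (Fin n))
        (A0 *ᵥ ((bb a' : S) : EuclideanSpace ℝ (Fin n)))
      = if a = a' then μ a' else 0 := by
    intro a a'
    have h1 : dotProduct ((bb a : S) : EuclideanSpace ℝ (Fin n))
        (A0 *ᵥ ((bb a' : S) : EuclideanSpace ℝ (Fin n)))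
        = (inner ℝ ((bb a : S) : EuclideanSpace ℝ (Fin n)) (Alin ↑(bb a')) : ℝ) := by
      rw [inner_eq_dot]
      rfl
    rw [h1, ← Submodule.inner_orthogonalProjection_eq_of_mem_left (K := S) (bb a) (Alin ↑(bb a'))]
    have h2 : Submodule.orthogonalProjection S (Alin ↑(bb a')) = T (bb a') := rfl
    rw [h2, heig a', real_inner_smul_right]
    rw [orthonormal_iff_ite.mp bb.orthonormal a a']
    by_cases h : a = a' <;> simp [h]
  have hnorm1 : ∀ a : Fin m,
      dotProduct ((bb a : S) : EuclideanSpace ℝ (Fin n))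
        ((bb a : S) : EuclideanSpace ℝ (Fin n)) = 1 := by
    intro a
    have h1 := real_inner_self_eq_norm_sq ((bb a : S) : EuclideanSpace ℝ (Fin n))
    rw [inner_eq_dot] at h1
    rw [h1, Submodule.norm_coe, bb.orthonormal.1 a]
    norm_num
  -- feasibility tested on eigenvectors
  have hfeas_vec : ∀ a : Fin m,
      1 - μ a ≤ ∑ j, q j * (((bb a : S) : EuclideanSpace ℝ (Fin n)) j)^2 := by
    intro a
    set xa : EuclideanSpace ℝ (Fin n) := ((bb a : S) : EuclideanSpace ℝ (Fin n)) with hxa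
    have h0 := hfeas.dotProduct_mulVec_nonneg xa
    simp only [star_trivial] at h0
    set Wsum : Matrix (Fin n) (Fin n) ℝ := ∑ k, η k • Matrix.vecMulVec (w k) (w k) with hWsum
    have hM : (∑ k, η k • Matrix.vecMulVec (w k) (w k)) + G
        - (1 / β) • Matrix.diagonal (fun i => G i i) + Matrix.diagonal q
        - (1 : Matrix (Fin n) (Fin n) ℝ)
        = Wsum + A0 + Matrix.diagonal q - 1 := by
      rw [hWsum, hA0, hDg]
      abel
    rw [hM] at h0
    rw [Matrix.sub_mulVec, Matrix.add_mulVec, Matrix.add_mulVec, Matrix.one_mulVec,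
      dotProduct_sub, dotProduct_add, dotProduct_add] at h0
    have hterm1 : dotProduct xa (Wsum *ᵥ xa) = 0 := by
      have h2 : Wsum *ᵥ xa = ∑ k, η k • ((w k ⬝ᵥ xa) • w k) := by
        rw [hWsum, sum_matrix_mulVec]
        refine Finset.sum_congr rfl fun k _ => ?_
        rw [Matrix.smul_mulVec, vecMulVec_mulVec']
      rw [h2]
      have h3 : ∀ k, w k ⬝ᵥ xa = 0 := hSmem _ (bb a).2
      simp [h3]
    have hterm2 : dotProduct xa (A0 *ᵥ xa) = μ a := by
      have := hxAx a a
      simpa using this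
    have hterm3 : dotProduct xa (Matrix.diagonal q *ᵥ xa) = ∑ j, q j * (xa j)^2 := by
      simp only [dotProduct, Matrix.mulVec_diagonal]
      refine Finset.sum_congr rfl fun j _ => ?_
      ring
    have hterm4 : dotProduct xa xa = 1 := hnorm1 a
    rw [hterm1, hterm2, hterm3, hterm4] at h0
    linarith
  -- positive eigenvalue count
  set P : Finset (Fin m) := Finset.univ.filter (fun a => 0 < μ a) with hP
  have hPcount : (P.card : ℝ) ≤ β * n := by
    have hcount := count_le' hβ0 hG (ι := ↥P)
      (fun a => ((bb ↑a : S) : EuclideanSpace ℝ (Fin n)))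
      ?_
    · rwa [Fintype.card_coe] at hcount
    intro c hcne
    set u : EuclideanSpace ℝ (Fin n) := ∑ a : ↥P, c a • ((bb ↑a : S) : EuclideanSpace ℝ (Fin n))
      with hu
    have hexp : dotProduct u (A0 *ᵥ u) = ∑ a : ↥P, (c a)^2 * μ ↑a := by
      rw [hu]
      simp only [WithLp.ofLp_sum, WithLp.ofLp_smul]
      rw [quad_expand A0 c (fun a => ((bb ↑a : S) : EuclideanSpace ℝ (Fin n)))]
      refine Finset.sum_congr rfl fun a _ => ?_
      rw [Finset.sum_eq_single a]
      · rw [hxAx ↑a ↑a, if_pos rfl]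
        ring
      · intro b _ hba
        rw [hxAx ↑a ↑b]
        have : ¬ ((a : Fin m) = (b : Fin m)) := fun hh => hba.symm (Subtype.ext hh)
        simp [this]
      · intro hna
        exact absurd (Finset.mem_univ a) hna
    have hpos : 0 < dotProduct u (A0 *ᵥ u) := by
      rw [hexp]
      obtain ⟨a0, ha0⟩ := Function.ne_iff.mp hcne
      simp only [Pi.zero_apply] at ha0
      refine Finset.sum_pos' (fun a _ => ?_) ⟨a0, Finset.mem_univ a0, ?_⟩
      · have hμa : 0 < μ ↑a := (Finset.mem_filter.mp a.2).2
        positivity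
      · have hμa : 0 < μ ↑a0 := (Finset.mem_filter.mp a0.2).2
        have h6 : 0 < (c a0)^2 := by
          rcases lt_or_gt_of_ne ha0 with h|h <;> nlinarith
        exact mul_pos h6 hμa
    have hquad : dotProduct u (A0 *ᵥ u)
        = dotProduct u (G *ᵥ u) - (1/β) * dotProduct u (Dg *ᵥ u) := by
      rw [hA0, Matrix.sub_mulVec, dotProduct_sub, Matrix.smul_mulVec,
        dotProduct_smul, smul_eq_mul]
    rw [hquad] at hpos
    have hgoal : dotProduct u (Dg *ᵥ u) < β * dotProduct u (G *ᵥ u) := by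
      have h1 : β * (dotProduct u (G *ᵥ u) - (1/β) * dotProduct u (Dg *ᵥ u))
          = β * dotProduct u (G *ᵥ u) - dotProduct u (Dg *ᵥ u) := by
        field_simp
      nlinarith
    rw [hDg] at hgoal
    simp only [hu, WithLp.ofLp_sum, WithLp.ofLp_smul] at hgoal ⊢
    exact hgoal
  -- Bessel bound on coordinates
  set N : Finset (Fin m) := Pᶜ with hN
  have hbess : ∀ j : Fin n,
      ∑ a ∈ N, (((bb a : S) : EuclideanSpace ℝ (Fin n)) j)^2 ≤ 1 := by
    intro j
    have hb := Orthonormal.sum_inner_products_le (𝕜 := ℝ) (s := N)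
      (x := EuclideanSpace.single j (1:ℝ)) hxon
    have h2 : ‖EuclideanSpace.single j (1:ℝ)‖ = 1 := by
      rw [EuclideanSpace.norm_single]; norm_num
    calc ∑ a ∈ N, (((bb a : S) : EuclideanSpace ℝ (Fin n)) j)^2
        = ∑ a ∈ N, ‖(inner ℝ ((bb a : S) : EuclideanSpace ℝ (Fin n))
            (EuclideanSpace.single j (1:ℝ)) : ℝ)‖^2 := by
          refine Finset.sum_congr rfl fun a _ => ?_
          rw [EuclideanSpace.inner_single_right]
          simp [starRingEnd_apply]
    _ ≤ ‖EuclideanSpace.single j (1:ℝ)‖^2 := hb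
    _ = 1 := by rw [h2]; norm_num
  -- combine
  have hmain : (N.card : ℝ) ≤ ∑ i, q i := by
    have h1 : (N.card : ℝ) ≤ ∑ a ∈ N, (1 - μ a) := by
      calc (N.card : ℝ) = ∑ _a ∈ N, (1:ℝ) := by simp
      _ ≤ ∑ a ∈ N, (1 - μ a) := by
          refine Finset.sum_le_sum fun a ha => ?_
          have h2 : ¬ (0 < μ a) := by
            rw [hN, Finset.mem_compl, hP, Finset.mem_filter] at ha
            intro hcon
            exact ha ⟨Finset.mem_univ a, hcon⟩
          linarith [le_of_not_gt h2]
    have h2 : ∑ a ∈ N, (1 - μ a)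
        ≤ ∑ a ∈ N, ∑ j, q j * (((bb a : S) : EuclideanSpace ℝ (Fin n)) j)^2 :=
      Finset.sum_le_sum fun a _ => hfeas_vec a
    have h3 : ∑ a ∈ N, ∑ j, q j * (((bb a : S) : EuclideanSpace ℝ (Fin n)) j)^2
        = ∑ j, q j * ∑ a ∈ N, (((bb a : S) : EuclideanSpace ℝ (Fin n)) j)^2 := by
      rw [Finset.sum_comm]
      refine Finset.sum_congr rfl fun j _ => ?_
      rw [Finset.mul_sum]
    have h4 : ∑ j, q j * ∑ a ∈ N, (((bb a : S) : EuclideanSpace ℝ (Fin n)) j)^2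
        ≤ ∑ j, q j := by
      refine Finset.sum_le_sum fun j _ => ?_
      exact mul_le_of_le_one_right (hq j) (hbess j)
    linarith
  have hcardP : P.card ≤ m := by
    calc P.card ≤ Fintype.card (Fin m) := Finset.card_le_univ P
    _ = m := Fintype.card_fin m
  have hcardN : (N.card : ℝ) = (m : ℝ) - P.card := by
    rw [hN, Finset.card_compl, Fintype.card_fin]
    push_cast [hcardP]
    ring
  have hnm : (n : ℝ) ≤ (m : ℝ) + l := by exact_mod_cast hrank
  rw [hcardN] at hmain
  rw [hl] at hnm
  linarith
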